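/- There exists a constant C depending only on the dimension d (one may take C = the Lebesgue measure of the unit ball of ℝ^d) such that: for every g ∈ L²(ℝ^d), every positive integer n, and every unit vector e ∈ ℝ^d, the function I_n(y) := ∫_{ℝ^d} (a(x) − a(y)) · g(x) · n^{d+1} · (D_e ζ)(n(y − x)) dx satisfies the uniform-in-n bound ‖I_n‖_{L²(ℝ^d)} ≤ C · K · M · ‖g‖_{L²(ℝ^d)}. -/

import Mathlib

open MeasureTheory Metric

lemma aux_fderiv_zero {E : Type*} [NormedAddCommGroup E] [NormedSpace ℝ E]
    (ζ : E → ℝ) (hsupp : Function.support ζ ⊆ closedBall 0 1)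
    {z : E} (hz : 1 < ‖z‖) : fderiv ℝ ζ z = 0 := by
  have hopen : IsOpen {w : E | 1 < ‖w‖} := isOpen_lt continuous_const continuous_norm
  have heq : ζ =ᶠ[nhds z] fun _ => (0 : ℝ) := by
    filter_upwards [hopen.mem_nhds hz] with w hw
    by_contra h
    have hsup : w ∈ Function.support ζ := h
    have := hsupp hsup
    rw [mem_closedBall_zero_iff] at this
    exact absurd this (not_le.mpr hw)
  rw [heq.fderiv_eq, fderiv_fun_const]
  rfl

set_option maxHeartbeats 1000000 in
theorem stmt_11 (d : ℕ) (hd : 1 ≤ d) (M K : ℝ) (hM : 0 < M) (hK : 0 < K)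
    (ζ : EuclideanSpace ℝ (Fin d) → ℝ) (hζ : ContDiff ℝ 1 ζ)
    (hsupp : Function.support ζ ⊆ closedBall 0 1)
    (hDζ : ∀ x, ‖fderiv ℝ ζ x‖ ≤ M)
    (a : EuclideanSpace ℝ (Fin d) → ℝ)
    (ha : ∀ x y, |a x - a y| ≤ K * ‖x - y‖) :
    ∃ C > (0 : ℝ),
      C = (volume (closedBall (0 : EuclideanSpace ℝ (Fin d)) 1)).toReal ∧
      ∀ g : EuclideanSpace ℝ (Fin d) → ℝ, MemLp g 2 volume →
        ∀ n : ℕ, 0 < n → ∀ e : EuclideanSpace ℝ (Fin d), ‖e‖ = 1 →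
          eLpNorm
            (fun y => ∫ x, (a x - a y) * g x * (n : ℝ) ^ (d + 1) *
              fderiv ℝ ζ ((n : ℝ) • (y - x)) e) 2 volume
            ≤ ENNReal.ofReal (C * K * M) * eLpNorm g 2 volume := by
  set V : ENNReal := volume (closedBall (0 : EuclideanSpace ℝ (Fin d)) 1) with hV
  have hVpos : 0 < V := measure_closedBall_pos volume 0 one_pos
  have hVfin : V ≠ ⊤ := measure_closedBall_lt_top.ne
  refine ⟨V.toReal, ENNReal.toReal_pos hVpos.ne' hVfin, rfl, ?_⟩
  intro g hg n hn e he
  set C := V.toReal with hC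
  have hn0 : (0 : ℝ) < (n : ℝ) := by exact_mod_cast hn
  set c : ℝ := K * M * (n : ℝ) ^ d with hc
  have hcpos : 0 < c := by positivity
  set Φ : EuclideanSpace ℝ (Fin d) → ENNReal :=
    Set.indicator (closedBall (0 : EuclideanSpace ℝ (Fin d)) ((n : ℝ)⁻¹)) (fun _ => ENNReal.ofReal c) with hΦ
  have hΦmeas : Measurable Φ :=
    Measurable.indicator measurable_const measurableSet_closedBall
  -- the constant value of ∫⁻ Φ translated
  set I : ENNReal := ENNReal.ofReal c * volume (closedBall (0 : EuclideanSpace ℝ (Fin d)) ((n : ℝ)⁻¹)) with hI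
  have hIfin : I ≠ ⊤ := by
    refine ENNReal.mul_ne_top ENNReal.ofReal_ne_top measure_closedBall_lt_top.ne
  -- translated integrals of Φ
  have hΦint_left : ∀ y : EuclideanSpace ℝ (Fin d), ∫⁻ x : EuclideanSpace ℝ (Fin d), Φ (y - x) = I := by
    intro y
    have : (fun x => Φ (y - x)) =
        Set.indicator (closedBall y ((n : ℝ)⁻¹)) (fun _ => ENNReal.ofReal c) := by
      funext x
      simp only [hΦ, Set.indicator]
      congr 1
      simp only [mem_closedBall, mem_closedBall_zero_iff, eq_iff_iff, dist_eq_norm,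
        norm_sub_rev, sub_zero]
    rw [this, lintegral_indicator_const measurableSet_closedBall,
      Measure.addHaar_closedBall_center, hI, mul_comm]
  have hΦint_right : ∀ x : EuclideanSpace ℝ (Fin d), ∫⁻ y : EuclideanSpace ℝ (Fin d), Φ (y - x) = I := by
    intro x
    have : (fun y => Φ (y - x)) =
        Set.indicator (closedBall x ((n : ℝ)⁻¹)) (fun _ => ENNReal.ofReal c) := by
      funext y
      simp only [hΦ, Set.indicator]
      congr 1
      simp only [mem_closedBall, mem_closedBall_zero_iff, eq_iff_iff, dist_eq_norm, sub_zero]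
    rw [this, lintegral_indicator_const measurableSet_closedBall,
      Measure.addHaar_closedBall_center, hI, mul_comm]
  -- I = ofReal (C * K * M)
  have hIval : I = ENNReal.ofReal (C * K * M) := by
    have hrank : Module.finrank ℝ (EuclideanSpace ℝ (Fin d)) = d := finrank_euclideanSpace_fin
    have hball : volume (closedBall (0 : EuclideanSpace ℝ (Fin d)) ((n : ℝ)⁻¹)) =
        ENNReal.ofReal (((n : ℝ)⁻¹) ^ d) * V := by
      rw [Measure.addHaar_closedBall' volume 0 (by positivity), hrank]
    rw [hI, hball, ← mul_assoc, ← ENNReal.ofReal_mul hcpos.le]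
    have hcc : c * ((n : ℝ)⁻¹) ^ d = K * M := by
      rw [hc]
      field_simp
      rw [← mul_pow, mul_one_div_cancel hn0.ne', one_pow]
    rw [hcc]
    rw [show ENNReal.ofReal (C * K * M) = ENNReal.ofReal (K * M) * ENNReal.ofReal C by
      rw [← ENNReal.ofReal_mul (by positivity)]; ring_nf,
      hC, ENNReal.ofReal_toReal hVfin]
  -- pointwise kernel bound
  have hker : ∀ y x : EuclideanSpace ℝ (Fin d),
      (‖(a x - a y) * g x * (n : ℝ) ^ (d + 1) * fderiv ℝ ζ ((n : ℝ) • (y - x)) e‖₊ : ENNReal)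
        ≤ Φ (y - x) * (‖g x‖₊ : ENNReal) := by
    intro y x
    by_cases hmem : y - x ∈ closedBall (0 : EuclideanSpace ℝ (Fin d)) ((n : ℝ)⁻¹)
    · have hΦval : Φ (y - x) = ENNReal.ofReal c := by
        simp [hΦ, Set.indicator_of_mem hmem]
      rw [hΦval, ← enorm_eq_nnnorm, ← enorm_eq_nnnorm, ← ofReal_norm, ← ofReal_norm,
        ← ENNReal.ofReal_mul hcpos.le]
      apply ENNReal.ofReal_le_ofReal
      rw [mem_closedBall_zero_iff] at hmem
      have h1 : |a x - a y| ≤ K * (n : ℝ)⁻¹ := by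
        refine (ha x y).trans ?_
        have : ‖x - y‖ ≤ (n : ℝ)⁻¹ := by rwa [norm_sub_rev]
        nlinarith
      have h2 : |fderiv ℝ ζ ((n : ℝ) • (y - x)) e| ≤ M := by
        calc |fderiv ℝ ζ ((n : ℝ) • (y - x)) e|
            ≤ ‖fderiv ℝ ζ ((n : ℝ) • (y - x))‖ * ‖e‖ :=
              (fderiv ℝ ζ ((n : ℝ) • (y - x))).le_opNorm e
          _ ≤ M := by rw [he, mul_one]; exact hDζ _
      calc ‖(a x - a y) * g x * (n : ℝ) ^ (d + 1) * fderiv ℝ ζ ((n : ℝ) • (y - x)) e‖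
          = |a x - a y| * |g x| * (n : ℝ) ^ (d + 1) * |fderiv ℝ ζ ((n : ℝ) • (y - x)) e| := by
            rw [Real.norm_eq_abs, abs_mul, abs_mul, abs_mul, abs_pow, Nat.abs_cast]
        _ ≤ (K * (n : ℝ)⁻¹) * |g x| * (n : ℝ) ^ (d + 1) * M := by
            gcongr
        _ = c * ‖g x‖ := by
            rw [Real.norm_eq_abs, hc, pow_succ]
            field_simp
    · have hz : 1 < ‖(n : ℝ) • (y - x)‖ := by
        rw [mem_closedBall_zero_iff, not_le] at hmem
        rw [norm_smul, Real.norm_eq_abs, abs_of_pos hn0]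
        calc (1:ℝ) = (n : ℝ) * (n : ℝ)⁻¹ := by rw [mul_inv_cancel₀ hn0.ne']
          _ < (n : ℝ) * ‖y - x‖ := by exact mul_lt_mul_of_pos_left hmem hn0
      rw [aux_fderiv_zero ζ hsupp hz]
      simp [hΦ, Set.indicator_of_notMem hmem]
  -- abbreviations
  set T : EuclideanSpace ℝ (Fin d) → ENNReal :=
    fun y => ∫⁻ x, Φ (y - x) * (‖g x‖₊ : ENNReal) with hT
  set S : EuclideanSpace ℝ (Fin d) → ENNReal :=
    fun y => ∫⁻ x, Φ (y - x) * (‖g x‖₊ : ENNReal) ^ 2 with hS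
  -- Step B : pointwise bound on the integral
  have hF : ∀ y : EuclideanSpace ℝ (Fin d),
      (‖∫ x, (a x - a y) * g x * (n : ℝ) ^ (d + 1) *
          fderiv ℝ ζ ((n : ℝ) • (y - x)) e‖₊ : ENNReal) ≤ T y := by
    intro y
    refine le_trans (enorm_integral_le_lintegral_enorm _) ?_
    exact lintegral_mono fun x => hker y x
  -- Step C : Cauchy-Schwarz
  have hpq : Real.HolderConjugate 2 2 := ⟨by norm_num, by norm_num, by norm_num⟩
  have hgm : AEMeasurable (fun x => (‖g x‖₊ : ENNReal)) volume := hg.1.enorm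
  have hCS : ∀ y : EuclideanSpace ℝ (Fin d), T y ^ 2 ≤ I * S y := by
    intro y
    have hΦy : Measurable (fun x : EuclideanSpace ℝ (Fin d) => Φ (y - x)) :=
      hΦmeas.comp (measurable_const.sub measurable_id)
    have hf : AEMeasurable (fun x : EuclideanSpace ℝ (Fin d) => Φ (y - x) ^ (2⁻¹ : ℝ))
        volume := (hΦy.pow_const _).aemeasurable
    have hh : AEMeasurable
        (fun x : EuclideanSpace ℝ (Fin d) => Φ (y - x) ^ (2⁻¹ : ℝ) * (‖g x‖₊ : ENNReal))
        volume := hf.mul hgm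
    have key := ENNReal.lintegral_mul_le_Lp_mul_Lq volume hpq hf hh
    have heq1 : (fun x : EuclideanSpace ℝ (Fin d) =>
        ((fun x => Φ (y - x) ^ (2⁻¹ : ℝ)) *
          (fun x => Φ (y - x) ^ (2⁻¹ : ℝ) * (‖g x‖₊ : ENNReal))) x) =
        fun x => Φ (y - x) * (‖g x‖₊ : ENNReal) := by
      funext x
      simp only [Pi.mul_apply, ← mul_assoc, ← ENNReal.rpow_add_of_nonneg _ _
        (by norm_num : (0:ℝ) ≤ 2⁻¹) (by norm_num : (0:ℝ) ≤ 2⁻¹)]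
      norm_num
    have heq2 : ∀ x : EuclideanSpace ℝ (Fin d),
        (Φ (y - x) ^ (2⁻¹ : ℝ)) ^ (2 : ℝ) = Φ (y - x) := by
      intro x
      rw [← ENNReal.rpow_mul]
      norm_num
    have heq3 : ∀ x : EuclideanSpace ℝ (Fin d),
        (Φ (y - x) ^ (2⁻¹ : ℝ) * (‖g x‖₊ : ENNReal)) ^ (2 : ℝ) =
          Φ (y - x) * (‖g x‖₊ : ENNReal) ^ 2 := by
      intro x
      rw [ENNReal.mul_rpow_of_nonneg _ _ (by norm_num : (0:ℝ) ≤ 2), heq2 x,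
        ENNReal.rpow_two]
    rw [heq1] at key
    simp only [heq2, heq3] at key
    have key2 : T y ≤ I ^ (1 / 2 : ℝ) * S y ^ (1 / 2 : ℝ) := by
      rw [hT, hS]
      simpa only [hΦint_left y] using key
    calc T y ^ 2 ≤ (I ^ (1 / 2 : ℝ) * S y ^ (1 / 2 : ℝ)) ^ 2 := by
          exact pow_le_pow_left' key2 2
      _ = I * S y := by
          rw [← ENNReal.rpow_two, ENNReal.mul_rpow_of_nonneg _ _ (by norm_num : (0:ℝ) ≤ 2),
            ← ENNReal.rpow_mul, ← ENNReal.rpow_mul]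
          norm_num
  -- Step E : integrate S
  have hSint : ∫⁻ y, S y = I * ∫⁻ x, (‖g x‖₊ : ENNReal) ^ 2 := by
    set G0 : EuclideanSpace ℝ (Fin d) → ENNReal := hgm.mk _ with hG0
    have hG0meas : Measurable G0 := hgm.measurable_mk
    have hG0ae : (fun x => (‖g x‖₊ : ENNReal)) =ᵐ[volume] G0 := hgm.ae_eq_mk
    have step1 : ∫⁻ y, S y = ∫⁻ y, ∫⁻ x, Φ (y - x) * G0 x ^ 2 := by
      refine lintegral_congr fun y => ?_
      refine lintegral_congr_ae ?_
      filter_upwards [hG0ae] with x hx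
      rw [hx]
    have hprod : AEMeasurable
        (Function.uncurry fun y x : EuclideanSpace ℝ (Fin d) => Φ (y - x) * G0 x ^ 2)
        (volume.prod volume) := by
      apply Measurable.aemeasurable
      exact (hΦmeas.comp (measurable_fst.sub measurable_snd)).mul
        ((hG0meas.pow_const 2).comp measurable_snd)
    have step2 : ∫⁻ y, ∫⁻ x, Φ (y - x) * G0 x ^ 2 =
        ∫⁻ x, ∫⁻ y, Φ (y - x) * G0 x ^ 2 := lintegral_lintegral_swap hprod
    have step3 : ∀ x : EuclideanSpace ℝ (Fin d),
        ∫⁻ y, Φ (y - x) * G0 x ^ 2 = I * G0 x ^ 2 := by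
      intro x
      have hm : Measurable fun y : EuclideanSpace ℝ (Fin d) => Φ (y - x) :=
        hΦmeas.comp (measurable_sub_const x)
      rw [lintegral_mul_const _ hm, hΦint_right x, mul_comm]
    have step4 : ∫⁻ x, G0 x ^ 2 = ∫⁻ x, (‖g x‖₊ : ENNReal) ^ 2 := by
      refine lintegral_congr_ae ?_
      filter_upwards [hG0ae] with x hx
      rw [hx]
    rw [step1, step2]
    simp only [step3]
    rw [lintegral_const_mul _ (hG0meas.pow_const 2), step4]
  -- Final assembly
  have h2 : (2 : ENNReal) ≠ 0 := by norm_num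
  have h2' : (2 : ENNReal) ≠ ⊤ := by norm_num
  rw [eLpNorm_eq_lintegral_rpow_enorm_toReal h2 h2', eLpNorm_eq_lintegral_rpow_enorm_toReal h2 h2']
  simp only [ENNReal.toReal_ofNat, ENNReal.rpow_two, enorm_eq_nnnorm]
  have hbound : ∫⁻ y, (‖∫ x, (a x - a y) * g x * (n : ℝ) ^ (d + 1) *
      fderiv ℝ ζ ((n : ℝ) • (y - x)) e‖₊ : ENNReal) ^ 2
        ≤ I ^ 2 * ∫⁻ x, (‖g x‖₊ : ENNReal) ^ 2 := by
    calc ∫⁻ y, (‖∫ x, (a x - a y) * g x * (n : ℝ) ^ (d + 1) *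
          fderiv ℝ ζ ((n : ℝ) • (y - x)) e‖₊ : ENNReal) ^ 2
        ≤ ∫⁻ y, T y ^ 2 := lintegral_mono fun y => pow_le_pow_left' (hF y) 2
      _ ≤ ∫⁻ y, I * S y := lintegral_mono fun y => hCS y
      _ = I * ∫⁻ y, S y := by
          rw [lintegral_const_mul' _ _ hIfin]
      _ = I ^ 2 * ∫⁻ x, (‖g x‖₊ : ENNReal) ^ 2 := by rw [hSint, ← mul_assoc, sq]
  calc (∫⁻ y, (‖∫ x, (a x - a y) * g x * (n : ℝ) ^ (d + 1) *
        fderiv ℝ ζ ((n : ℝ) • (y - x)) e‖₊ : ENNReal) ^ 2) ^ (1 / (2:ℝ))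
      ≤ (I ^ 2 * ∫⁻ x, (‖g x‖₊ : ENNReal) ^ 2) ^ (1 / (2:ℝ)) :=
        ENNReal.rpow_le_rpow hbound (by norm_num)
    _ = I * (∫⁻ x, (‖g x‖₊ : ENNReal) ^ 2) ^ (1 / (2:ℝ)) := by
        rw [ENNReal.mul_rpow_of_nonneg _ _ (by norm_num : (0:ℝ) ≤ 1/2),
          ← ENNReal.rpow_two, ← ENNReal.rpow_mul]
        norm_num
    _ = ENNReal.ofReal (C * K * M) * (∫⁻ x, (‖g x‖₊ : ENNReal) ^ 2) ^ (1 / (2:ℝ)) := by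
        rw [hIval]
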